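/- The sequence of functions g_n defined by g_0(y) = 1 and g_n(y) = y·[g_{n-1}(y) + ((1-y)/m)·g_{n-1}'(y)] for n ≥ 1 satisfies g_n(y) = Σ_{k=1}^{n} (y^k / m^{n-k}) · (∏_{h=0}^{k-1} (1 - h/m)) · S(n,k), where S(n,k) denotes the Stirling number of the second kind. -/

import Mathlib

/-- Stirling numbers of the second kind. -/
def stirling2 : ℕ → ℕ → ℕ
  | 0, 0 => 1
  | 0, _ + 1 => 0
  | _ + 1, 0 => 0
  | n + 1, k + 1 => stirling2 n k + (k + 1) * stirling2 n (k + 1)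

lemma stirling2_eq_zero : ∀ {n k : ℕ}, n < k → stirling2 n k = 0 := by
  intro n
  induction n with
  | zero => intro k h; cases k with
    | zero => omega
    | succ k => rfl
  | succ n ih =>
    intro k h
    cases k with
    | zero => omega
    | succ k => simp [stirling2, ih (show n < k by omega), ih (show n < k + 1 by omega)]

noncomputable def co (m n k : ℕ) : ℝ :=
  1 / (m:ℝ) ^ (n - k) * (∏ h ∈ Finset.range k, (1 - (h:ℝ) / m)) * (stirling2 n k : ℝ)

lemma hasDerivAt_poly (s : Finset ℕ) (c : ℕ → ℝ) (y : ℝ) :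
    HasDerivAt (fun x => ∑ k ∈ s, c k * x ^ k) (∑ k ∈ s, c k * (k * y ^ (k-1))) y :=
  HasDerivAt.fun_sum fun k _ => (hasDerivAt_pow k y).const_mul (c k)

lemma key (m n : ℕ) (hm : 1 ≤ m) (hn : 1 ≤ n) (y : ℝ) :
    y * ((∑ k ∈ Finset.Icc 1 n, co m n k * y ^ k)
      + (1 - y) / m * ∑ k ∈ Finset.Icc 1 n, co m n k * (k * y ^ (k-1)))
    = ∑ k ∈ Finset.Icc 1 (n+1), co m (n+1) k * y ^ k := by
  have hm0 : (m:ℝ) ≠ 0 := by positivity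
  set A : ℕ → ℝ := fun j =>
    1 / (m:ℝ) ^ (n + 1 - j) * (∏ h ∈ Finset.range j, (1 - (h:ℝ) / m)) *
      (stirling2 n (j-1) : ℝ) with hA
  set B : ℕ → ℝ := fun j => (j:ℝ) / m * co m n j with hB
  have hsplit : ∀ j ∈ Finset.Icc 1 (n+1), co m (n+1) j * y ^ j = A j * y ^ j + B j * y ^ j := by
    intro j hj
    rw [Finset.mem_Icc] at hj
    obtain ⟨j, rfl⟩ : ∃ j', j = j' + 1 := ⟨j - 1, by omega⟩
    have hst : stirling2 (n+1) (j+1) = stirling2 n j + (j+1) * stirling2 n (j+1) := rfl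
    rw [hA, hB]
    simp only [co, hst, Nat.add_sub_cancel]
    push_cast
    rcases eq_or_lt_of_le (show j + 1 ≤ n + 1 by omega) with h | h
    · rw [stirling2_eq_zero (show n < j + 1 by omega),
        show n - j = 0 by omega, show n - (j+1) = 0 by omega]
      push_cast
      ring
    · rw [show n - j = (n - (j+1)) + 1 by omega, pow_succ]
      field_simp
  rw [Finset.sum_congr rfl hsplit, Finset.sum_add_distrib]
  -- A part
  have hIcc : Finset.Icc 1 (n+1) = insert 1 (Finset.Icc 2 (n+1)) := by
    ext x; simp only [Finset.mem_Icc, Finset.mem_insert]; omega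
  have hA1 : A 1 * y ^ 1 = 0 := by
    rw [hA]
    simp only
    have : stirling2 n 0 = 0 := by
      cases n with
      | zero => omega
      | succ n => rfl
    rw [this]
    push_cast; ring
  have hmap : Finset.Icc 2 (n+1) = Finset.map (addRightEmbedding 1) (Finset.Icc 1 n) := by
    rw [Finset.map_add_right_Icc]
  have hApart : ∑ j ∈ Finset.Icc 1 (n+1), A j * y ^ j
      = ∑ k ∈ Finset.Icc 1 n, A (k+1) * y ^ (k+1) := by
    rw [hIcc, Finset.sum_insert (by simp), hA1, zero_add, hmap, Finset.sum_map]
    rfl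
  -- B part
  have hBtop : B (n+1) * y ^ (n+1) = 0 := by
    rw [hB]
    simp only [co, stirling2_eq_zero (show n < n + 1 by omega)]
    push_cast; ring
  have hBpart : ∑ j ∈ Finset.Icc 1 (n+1), B j * y ^ j
      = ∑ k ∈ Finset.Icc 1 n, B k * y ^ k := by
    rw [Finset.sum_Icc_succ_top (show 1 ≤ n + 1 by omega), hBtop, add_zero]
  rw [hApart, hBpart, ← Finset.sum_add_distrib]
  -- LHS
  have hLHS : y * ((∑ k ∈ Finset.Icc 1 n, co m n k * y ^ k)
      + (1 - y) / m * ∑ k ∈ Finset.Icc 1 n, co m n k * (k * y ^ (k-1)))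
      = ∑ k ∈ Finset.Icc 1 n,
        (y * (co m n k * y ^ k) + y * (1 - y) / m * (co m n k * (k * y ^ (k-1)))) := by
    rw [Finset.sum_add_distrib, ← Finset.mul_sum, ← Finset.mul_sum]
    ring
  rw [hLHS]
  apply Finset.sum_congr rfl
  intro k hk
  rw [Finset.mem_Icc] at hk
  obtain ⟨k, rfl⟩ : ∃ k', k = k' + 1 := ⟨k - 1, by omega⟩
  have hA' : A (k+1+1) = co m n (k+1) * (1 - ((k:ℝ)+1) / m) := by
    rw [hA]
    simp only [co, Nat.add_sub_cancel]
    have h1 : n + 1 - (k+1+1) = n - (k+1) := by omega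
    rw [h1, Finset.prod_range_succ]
    push_cast
    ring
  rw [hA', hB]
  simp only [Nat.add_sub_cancel]
  push_cast
  ring

theorem recurrence_solution_stirling (m : ℕ) (hm : 1 ≤ m) (g : ℕ → ℝ → ℝ)
    (h0 : ∀ y, g 0 y = 1)
    (hrec : ∀ n : ℕ, 1 ≤ n → ∀ y : ℝ,
      g n y = y * (g (n - 1) y + (1 - y) / m * deriv (g (n - 1)) y)) :
    ∀ n : ℕ, 1 ≤ n → ∀ y : ℝ,
      g n y = ∑ k ∈ Finset.Icc 1 n,
        y ^ k / (m : ℝ) ^ (n - k) *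
          (∏ h ∈ Finset.range k, (1 - (h : ℝ) / m)) * (stirling2 n k : ℝ) := by
  have main : ∀ n : ℕ, 1 ≤ n → ∀ y : ℝ,
      g n y = ∑ k ∈ Finset.Icc 1 n, co m n k * y ^ k := by
    refine Nat.le_induction ?_ ?_
    · intro y
      have h1 := hrec 1 le_rfl y
      have hg0 : g 0 = fun _ => (1:ℝ) := funext h0
      rw [hg0] at h1
      simp only [deriv_const'] at h1
      simp only [Finset.Icc_self, Finset.sum_singleton]
      rw [h1]
      simp [co, stirling2]
    · intro n hn IH y
      have hgn : g n = fun x => ∑ k ∈ Finset.Icc 1 n, co m n k * x ^ k := funext IH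
      have hd : deriv (g n) y = ∑ k ∈ Finset.Icc 1 n, co m n k * (k * y ^ (k-1)) := by
        rw [hgn]; exact (hasDerivAt_poly (Finset.Icc 1 n) (co m n) y).deriv
      have h1 := hrec (n+1) (by omega) y
      rw [Nat.add_sub_cancel] at h1
      rw [h1, hd, IH y]
      exact key m n hm hn y
  intro n hn y
  rw [main n hn y]
  apply Finset.sum_congr rfl
  intro k hk
  simp only [co]
  ring
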